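/- Assume f is convex, L-Lipschitz and β-smooth, P is a gossip matrix with spectral bound λ ∈ [0, 1), and η_t ≤ 2/β for every t ∈ {1,…,T}. Then for every z ∈ 𝒵, |f(w̄^{T+1}; z) − f(v̄^{T+1}; z)| ≤ 4βL² ∑_{t=1}^T η_t ∑_{q=1}^{t−1} η_q λ^{t−q−1} + (2L²/m) ∑_{t=1}^T η_t 𝟙[j_t(r)=k]. -/

import Mathlib

open scoped RealInnerProductSpace
open Filter Set Topology Finset


private lemma grad_lower {H : Type*} [NormedAddCommGroup H] [InnerProductSpace ℝ H]
    (g : H → ℝ) (g' : H → H)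
    (hdiff : ∀ x, HasFDerivAt g ((innerSL ℝ) (g' x)) x)
    (hconv : ConvexOn ℝ Set.univ g) (x y : H) :
    g x + ⟪g' x, y - x⟫ ≤ g y := by
  set φ : ℝ → ℝ := fun t => g (x + t • (y - x)) with hφ
  have hc : HasDerivAt φ ⟪g' x, y - x⟫ 0 := by
    have h1 : HasDerivAt (fun t : ℝ => x + t • (y - x)) (y - x) 0 := by
      simpa using ((hasDerivAt_id (0:ℝ)).smul_const (y - x)).const_add x
    have h2 := (hdiff (x + (0:ℝ) • (y - x))).comp_hasDerivAt 0 h1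
    simp at h2; exact h2
  have key : Tendsto (slope φ 0) (𝓝[>] 0) (𝓝 ⟪g' x, y - x⟫) :=
    (hasDerivAt_iff_tendsto_slope.mp hc).mono_left
      (nhdsWithin_mono 0 (fun a ha => ne_of_gt ha))
  have hb : ∀ᶠ t in 𝓝[>] (0:ℝ), slope φ 0 t ≤ g y - g x := by
    filter_upwards [Ioc_mem_nhdsGT_of_mem (Set.mem_Ico.mpr ⟨le_refl (0:ℝ), one_pos⟩)] with t ht
    have h0 : (0:ℝ) < t := ht.1
    have h1 : t ≤ 1 := ht.2
    have hcvx := hconv.2 (Set.mem_univ x) (Set.mem_univ y)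
      (sub_nonneg.mpr h1) h0.le (by ring)
    have heq : (1 - t) • x + t • y = x + t • (y - x) := by
      module
    rw [heq] at hcvx
    have : slope φ 0 t = (φ t - φ 0) / t := by
      rw [slope_def_field]; ring_nf
    rw [this, div_le_iff₀ h0]
    have hφ0 : φ 0 = g x := by simp [hφ]
    have hφt : φ t = g (x + t • (y - x)) := rfl
    rw [hφt, hφ0]
    have hs : (1 - t) • g x + t • g y = (1-t) * g x + t * g y := rfl
    nlinarith [hcvx]
  have := le_of_tendsto key hb
  linarith

private lemma descent_lemma {H : Type*} [NormedAddCommGroup H] [InnerProductSpace ℝ H]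
    (g : H → ℝ) (g' : H → H) (β : ℝ) (hβ : 0 < β)
    (hdiff : ∀ x, HasFDerivAt g ((innerSL ℝ) (g' x)) x)
    (hsmooth : ∀ x y, ‖g' x - g' y‖ ≤ β * ‖x - y‖) (x y : H) :
    g y ≤ g x + ⟪g' x, y - x⟫ + β / 2 * ‖y - x‖ ^ 2 := by
  set δ := ‖y - x‖ with hδ
  have hδ0 : 0 ≤ δ := norm_nonneg _
  have main : ∀ N : ℕ, 0 < N →
      g y - g x - ⟪g' x, y - x⟫ ≤ β / 2 * δ ^ 2 + β * δ ^ 2 / N := by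
    intro N hN
    have hN0 : (0:ℝ) < N := by exact_mod_cast hN
    set p : ℕ → H := fun i => x + ((i : ℝ) / N) • (y - x) with hp
    set Δ : H := ((N : ℝ))⁻¹ • (y - x) with hΔdef
    have hΔnorm : ‖Δ‖ = δ / N := by
      rw [hΔdef, norm_smul, norm_inv, Real.norm_natCast, hδ]; ring
    have hdiffp : ∀ i : ℕ, p (i + 1) - p i = Δ := by
      intro i
      simp only [hp, hΔdef]
      push_cast
      module
    -- piece bound
    have piece : ∀ i : ℕ, g (p (i + 1)) - g (p i) - ⟪g' (p i), Δ⟫ ≤ β * ‖Δ‖ * ‖Δ‖ := by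
      intro i
      have hseg : Convex ℝ (segment ℝ (p i) (p (i + 1))) := convex_segment _ _
      have hbd : ∀ z ∈ segment ℝ (p i) (p (i+1)),
          ‖(innerSL ℝ) (g' z) - (innerSL ℝ) (g' (p i))‖ ≤ β * ‖Δ‖ := by
        intro z hz
        obtain ⟨a, b, ha, hb, hab, rfl⟩ := hz
        have hzz : a • p i + b • p (i+1) - p i = b • (p (i+1) - p i) := by
          have : a = 1 - b := by linarith
          rw [this]; module
        have h1 : ‖(innerSL ℝ) (g' (a • p i + b • p (i+1))) - (innerSL ℝ) (g' (p i))‖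
            = ‖g' (a • p i + b • p (i+1)) - g' (p i)‖ := by
          rw [← map_sub, innerSL_apply_norm]
        rw [h1]
        calc ‖g' (a • p i + b • p (i+1)) - g' (p i)‖
            ≤ β * ‖a • p i + b • p (i+1) - p i‖ := hsmooth _ _
          _ = β * (b * ‖Δ‖) := by rw [hzz, hdiffp i, norm_smul, Real.norm_of_nonneg hb]
          _ ≤ β * (1 * ‖Δ‖) := by
              have : b ≤ 1 := by linarith
              gcongr
          _ = β * ‖Δ‖ := by ring
      have := Convex.norm_image_sub_le_of_norm_hasFDerivWithin_le'
        (f := g) (f' := fun z => (innerSL ℝ) (g' z)) (φ := (innerSL ℝ) (g' (p i)))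
        (s := segment ℝ (p i) (p (i+1)))
        (fun z hz => (hdiff z).hasFDerivWithinAt) hbd hseg
        (left_mem_segment ℝ _ _) (right_mem_segment ℝ _ _)
      rw [hdiffp i] at this
      have h2 : ((innerSL ℝ) (g' (p i))) Δ = ⟪g' (p i), Δ⟫ := rfl
      calc g (p (i+1)) - g (p i) - ⟪g' (p i), Δ⟫
          ≤ |g (p (i+1)) - g (p i) - ⟪g' (p i), Δ⟫| := le_abs_self _
        _ ≤ β * ‖Δ‖ * ‖Δ‖ := by
            rw [← Real.norm_eq_abs]
            rw [← h2]
            exact this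
    -- drift bound
    have drift : ∀ i : ℕ, ⟪g' (p i) - g' x, Δ⟫ ≤ β * ((i : ℝ) / N * δ) * ‖Δ‖ := by
      intro i
      calc ⟪g' (p i) - g' x, Δ⟫ ≤ ‖g' (p i) - g' x‖ * ‖Δ‖ := real_inner_le_norm _ _
        _ ≤ β * ‖p i - x‖ * ‖Δ‖ := by
            have := hsmooth (p i) x
            have h0 : (0:ℝ) ≤ ‖Δ‖ := norm_nonneg _
            nlinarith [norm_nonneg (p i - x)]
        _ = β * ((i : ℝ) / N * δ) * ‖Δ‖ := by
            congr 2
            rw [hp]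
            simp only [add_sub_cancel_left]
            rw [norm_smul, Real.norm_of_nonneg (by positivity)]
    -- telescope
    have hpN : p N = y := by
      simp only [hp]
      rw [div_self (ne_of_gt hN0)]
      simp
    have hp0 : p 0 = x := by simp [hp]
    have tele : g y - g x = ∑ i ∈ Finset.range N, (g (p (i+1)) - g (p i)) := by
      rw [Finset.sum_range_sub (fun i => g (p i)), hpN, hp0]
    have hinner : ⟪g' x, y - x⟫ = ∑ i ∈ Finset.range N, ⟪g' x, Δ⟫ := by
      rw [Finset.sum_const, Finset.card_range, hΔdef, real_inner_smul_right, nsmul_eq_mul]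
      field_simp
    rw [tele, hinner, ← Finset.sum_sub_distrib]
    have hsum : ∀ i ∈ Finset.range N,
        g (p (i+1)) - g (p i) - ⟪g' x, Δ⟫
          ≤ β * ‖Δ‖ * ‖Δ‖ + β * ((i:ℝ) / N * δ) * ‖Δ‖ := by
      intro i _
      have h3 : ⟪g' (p i) - g' x, Δ⟫ = ⟪g' (p i), Δ⟫ - ⟪g' x, Δ⟫ := inner_sub_left _ _ _
      have := piece i
      have := drift i
      linarith
    calc ∑ i ∈ Finset.range N, (g (p (i+1)) - g (p i) - ⟪g' x, Δ⟫)
        ≤ ∑ i ∈ Finset.range N, (β * ‖Δ‖ * ‖Δ‖ + β * ((i:ℝ) / N * δ) * ‖Δ‖) :=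
          Finset.sum_le_sum hsum
      _ = N * (β * ‖Δ‖ * ‖Δ‖) + (∑ i ∈ Finset.range N, (i:ℝ)) * (β / N * δ * ‖Δ‖) := by
          rw [Finset.sum_add_distrib, Finset.sum_const, Finset.card_range, Finset.sum_mul,
            nsmul_eq_mul]
          congr 1
          apply Finset.sum_congr rfl
          intro i _
          ring
      _ ≤ β / 2 * δ ^ 2 + β * δ ^ 2 / N := by
          have hgauss : (∑ i ∈ Finset.range N, (i:ℝ)) ≤ (N:ℝ)^2 / 2 := by
            have h := Finset.sum_range_id_mul_two N
            have h2 : ((∑ i ∈ Finset.range N, i : ℕ) : ℝ) * 2 = (N:ℝ) * ((N:ℕ) - 1 : ℕ) := by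
              exact_mod_cast congrArg (Nat.cast : ℕ → ℝ) h
            push_cast at h2
            have hN1 : (1:ℝ) ≤ N := by exact_mod_cast hN
            rw [Nat.cast_sub hN] at h2 <;> try skip
            · push_cast at h2; nlinarith
          rw [hΔnorm]
          have hterm : (N:ℝ) * (β * (δ/N) * (δ/N)) = β * δ^2 / N := by
            field_simp
          rw [hterm]
          have : (∑ i ∈ Finset.range N, (i:ℝ)) * (β / N * δ * (δ/N)) ≤
              ((N:ℝ)^2/2) * (β / N * δ * (δ/N)) := by
            apply mul_le_mul_of_nonneg_right hgauss
            positivity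
          have heq2 : ((N:ℝ)^2/2) * (β / N * δ * (δ/N)) = β / 2 * δ^2 := by
            field_simp
          linarith
  -- conclude by taking N large
  have key : g y - g x - ⟪g' x, y - x⟫ ≤ β / 2 * δ ^ 2 := by
    refine le_of_forall_pos_le_add ?_
    intro ε hε
    obtain ⟨N, hN⟩ := exists_nat_gt (β * δ ^ 2 / ε)
    have hN0 : 0 < N := by
      by_contra h
      push_neg at h
      interval_cases N
      have h9 : (0:ℝ) ≤ β * δ ^ 2 / ε := by positivity
      simp only [Nat.cast_zero] at hN
      linarith
    have h1 := main N hN0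
    have hNpos : (0:ℝ) < N := by exact_mod_cast hN0
    have h2 : β * δ ^ 2 / N ≤ ε := by
      rw [div_le_iff₀ hNpos]
      have : β * δ^2 / ε < N := hN
      rw [div_lt_iff₀ hε] at this
      linarith
    linarith
  linarith

private lemma coco_lemma {H : Type*} [NormedAddCommGroup H] [InnerProductSpace ℝ H]
    (g : H → ℝ) (g' : H → H) (β : ℝ) (hβ : 0 < β)
    (hlow : ∀ x y, g x + ⟪g' x, y - x⟫ ≤ g y)
    (hdesc : ∀ x y, g y ≤ g x + ⟪g' x, y - x⟫ + β / 2 * ‖y - x‖ ^ 2) (x y : H) :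
    ‖g' x - g' y‖ ^ 2 ≤ β * ⟪g' x - g' y, x - y⟫ := by
  have key : ∀ a b : H, g a + ⟪g' a, b - a⟫ + (2 * β)⁻¹ * ‖g' b - g' a‖ ^ 2 ≤ g b := by
    intro a b
    set d := g' b - g' a with hd
    set u := b - β⁻¹ • d with hu
    have h1 := hlow a u
    have h2 := hdesc b u
    have e1 : ⟪g' a, u - a⟫ = ⟪g' a, b - a⟫ - β⁻¹ * ⟪g' a, d⟫ := by
      have : u - a = (b - a) - β⁻¹ • d := by rw [hu]; abel
      rw [this, inner_sub_right, real_inner_smul_right]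
    have e2 : ⟪g' b, u - b⟫ = -(β⁻¹ * ⟪g' b, d⟫) := by
      have : u - b = -(β⁻¹ • d) := by rw [hu]; abel
      rw [this, inner_neg_right, real_inner_smul_right]
    have e3 : ‖u - b‖ ^ 2 = β⁻¹ ^ 2 * ‖d‖ ^ 2 := by
      have : u - b = -(β⁻¹ • d) := by rw [hu]; abel
      rw [this, norm_neg, norm_smul, Real.norm_of_nonneg (by positivity : (0:ℝ) ≤ β⁻¹)]
      ring
    have e4 : ⟪g' b, d⟫ - ⟪g' a, d⟫ = ‖d‖ ^ 2 := by
      rw [← inner_sub_left, ← hd, real_inner_self_eq_norm_sq]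
    rw [e1] at h1
    rw [e2, e3] at h2
    have hβ' : β ≠ 0 := ne_of_gt hβ
    have : β / 2 * (β⁻¹ ^ 2 * ‖d‖ ^ 2) = (2 * β)⁻¹ * ‖d‖ ^ 2 := by field_simp
    rw [this] at h2
    have e4' : β⁻¹ * ⟪g' b, d⟫ - β⁻¹ * ⟪g' a, d⟫ = β⁻¹ * ‖d‖ ^ 2 := by
      rw [← mul_sub, e4]
    have e10 : β⁻¹ * ‖d‖ ^ 2 - (2 * β)⁻¹ * ‖d‖ ^ 2 = (2 * β)⁻¹ * ‖d‖ ^ 2 := by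
      field_simp
      ring
    linarith [h1, h2, e4', e10]
  have k1 := key x y
  have k2 := key y x
  have e6 : ⟪g' x, y - x⟫ = -⟪g' x, x - y⟫ := by
    rw [← inner_neg_right]; congr 1; abel
  have e7 : ⟪g' y, x - y⟫ = ⟪g' y, x - y⟫ := rfl
  have e8 : ⟪g' x - g' y, x - y⟫ = ⟪g' x, x - y⟫ - ⟪g' y, x - y⟫ := inner_sub_left _ _ _
  have hβi : (0:ℝ) < (2*β)⁻¹ := by positivity
  have goal2 : 2 * ((2*β)⁻¹ * ‖g' x - g' y‖^2) ≤ ⟪g' x - g' y, x - y⟫ := by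
    rw [e8]
    have e9 : ‖g' y - g' x‖ = ‖g' x - g' y‖ := norm_sub_rev _ _
    rw [e9] at k1
    linarith [k1, k2, e6]
  have : 2 * ((2*β)⁻¹ * ‖g' x - g' y‖^2) = β⁻¹ * ‖g' x - g' y‖^2 := by
    field_simp
  rw [this] at goal2
  calc ‖g' x - g' y‖^2 = β * (β⁻¹ * ‖g' x - g' y‖^2) := by field_simp
    _ ≤ β * ⟪g' x - g' y, x - y⟫ := by
        apply mul_le_mul_of_nonneg_left goal2 (le_of_lt hβ)

private lemma nonexp_lemma {H : Type*} [NormedAddCommGroup H] [InnerProductSpace ℝ H]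
    (g' : H → H) (β η : ℝ) (hβ : 0 < β) (hη0 : 0 ≤ η) (hη : η ≤ 2 / β)
    (hcoco : ∀ x y, ‖g' x - g' y‖ ^ 2 ≤ β * ⟪g' x - g' y, x - y⟫) (x y : H) :
    ‖x - η • g' x - (y - η • g' y)‖ ≤ ‖x - y‖ := by
  have h1 : x - η • g' x - (y - η • g' y) = (x - y) - η • (g' x - g' y) := by
    rw [smul_sub]; abel
  rw [h1]
  have h2 : ‖(x - y) - η • (g' x - g' y)‖ ^ 2 ≤ ‖x - y‖ ^ 2 := by
    rw [norm_sub_sq_real, real_inner_smul_right, norm_smul,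
      Real.norm_of_nonneg hη0, real_inner_comm]
    have hc := hcoco x y
    have hβ' : (0:ℝ) < β := hβ
    have hd2 : 0 ≤ ‖g' x - g' y‖^2 := sq_nonneg _
    have hkey : η^2 * ‖g' x - g' y‖^2 ≤ 2 * η * ⟪g' x - g' y, x - y⟫ := by
      have h3 : η * ‖g' x - g' y‖^2 ≤ η * (β * ⟪g' x - g' y, x - y⟫) :=
        mul_le_mul_of_nonneg_left hc hη0
      have h4 : η^2 * ‖g' x - g' y‖^2 ≤ η * (2/β) * ‖g' x - g' y‖^2 := by
        nlinarith [mul_le_mul_of_nonneg_right (mul_le_mul_of_nonneg_left hη hη0) hd2]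
      have h5 : η * (2/β) * (β * ⟪g' x - g' y, x - y⟫) = 2 * η * ⟪g' x - g' y, x - y⟫ := by
        field_simp
      nlinarith [mul_le_mul_of_nonneg_left h3 (by positivity : (0:ℝ) ≤ 2/β)]
    nlinarith [hkey]
  have := Real.sqrt_le_sqrt h2
  rwa [Real.sqrt_sq (norm_nonneg _), Real.sqrt_sq (norm_nonneg _)] at this

private lemma l2_triangle {H : Type*} [NormedAddCommGroup H] (m : ℕ) (u v : Fin m → H) :
    Real.sqrt (∑ i, ‖u i + v i‖ ^ 2) ≤
      Real.sqrt (∑ i, ‖u i‖ ^ 2) + Real.sqrt (∑ i, ‖v i‖ ^ 2) := by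
  have h := norm_add_le ((WithLp.equiv 2 (∀ _ : Fin m, H)).symm u)
    ((WithLp.equiv 2 (∀ _ : Fin m, H)).symm v)
  simpa [PiLp.norm_eq_of_L2] using h

private lemma l1_le_sqrt_l2 {H : Type*} [NormedAddCommGroup H] (m : ℕ) (u : Fin m → H) :
    ∑ i, ‖u i‖ ≤ Real.sqrt m * Real.sqrt (∑ i, ‖u i‖ ^ 2) := by
  have h := Finset.sum_mul_sq_le_sq_mul_sq Finset.univ (fun _ : Fin m => (1:ℝ))
    (fun i => ‖u i‖)
  simp only [one_mul, one_pow, Finset.sum_const, Finset.card_univ, Fintype.card_fin,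
    nsmul_eq_mul, mul_one] at h
  have h1 : ∑ i, ‖u i‖ = Real.sqrt ((∑ i, ‖u i‖) ^ 2) :=
    (Real.sqrt_sq (Finset.sum_nonneg fun i _ => norm_nonneg _)).symm
  rw [h1, ← Real.sqrt_mul (by positivity)]
  exact Real.sqrt_le_sqrt h

private lemma l2_le_sup {H : Type*} [NormedAddCommGroup H] (m : ℕ) (u : Fin m → H)
    (C : ℝ) (hC : 0 ≤ C) (h : ∀ i, ‖u i‖ ≤ C) :
    Real.sqrt (∑ i, ‖u i‖ ^ 2) ≤ Real.sqrt m * C := by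
  have h1 : ∑ i, ‖u i‖ ^ 2 ≤ (m : ℝ) * C ^ 2 := by
    calc ∑ i, ‖u i‖ ^ 2 ≤ ∑ _i : Fin m, C ^ 2 :=
          Finset.sum_le_sum fun i _ => by
            have := h i
            nlinarith [norm_nonneg (u i)]
      _ = (m : ℝ) * C ^ 2 := by
          simp [Finset.sum_const, Finset.card_univ, nsmul_eq_mul]
  calc Real.sqrt (∑ i, ‖u i‖ ^ 2) ≤ Real.sqrt ((m:ℝ) * C ^ 2) := Real.sqrt_le_sqrt h1
    _ = Real.sqrt m * C := by
        rw [Real.sqrt_mul (by positivity), Real.sqrt_sq hC]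

private lemma consensus_bound {H : Type*} [NormedAddCommGroup H] [InnerProductSpace ℝ H]
    (m T : ℕ) (hm : 1 ≤ m)
    (P : Fin m → Fin m → ℝ)
    (hProw : ∀ i, ∑ l, P i l = 1) (hPcol : ∀ l, ∑ i, P i l = 1)
    (lam : ℝ) (hlam0 : 0 ≤ lam)
    (hspec : ∀ vv : Fin m → H, ∑ i, vv i = 0 →
      Real.sqrt (∑ i, ‖∑ l, P i l • vv l‖ ^ 2) ≤ lam * Real.sqrt (∑ i, ‖vv i‖ ^ 2))
    (L : ℝ) (hL : 0 ≤ L)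
    (η : ℕ → ℝ) (hηnn : ∀ t, 1 ≤ t → t ≤ T → 0 ≤ η t)
    (G : ℕ → Fin m → H) (hG : ∀ t i, 1 ≤ t → t ≤ T → ‖G t i‖ ≤ L)
    (w₀ : H) (w : ℕ → Fin m → H) (hw1 : ∀ i, w 1 i = w₀)
    (hrec : ∀ t, 1 ≤ t → t ≤ T → ∀ i, w (t+1) i = ∑ l, P i l • w t l - η t • G t i) :
    ∀ t, 1 ≤ t → t ≤ T + 1 →
      Real.sqrt (∑ i, ‖w t i - (m:ℝ)⁻¹ • ∑ l, w t l‖ ^ 2)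
        ≤ 2 * L * Real.sqrt m * ∑ q ∈ Finset.Icc 1 (t-1), η q * lam ^ (t-1-q) := by
  have hm0 : (0:ℝ) < m := by exact_mod_cast hm
  intro t ht1
  induction t, ht1 using Nat.le_induction with
  | base =>
    intro _
    have hbar : (m:ℝ)⁻¹ • ∑ l, w 1 l = w₀ := by
      simp only [hw1, Finset.sum_const, Finset.card_univ, Fintype.card_fin]
      rw [← Nat.cast_smul_eq_nsmul ℝ, smul_smul, inv_mul_cancel₀ (ne_of_gt hm0), one_smul]
    have hz : ∀ i : Fin m, ‖w 1 i - (m:ℝ)⁻¹ • ∑ l, w 1 l‖ ^ 2 = 0 := by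
      intro i
      rw [hbar, hw1]
      simp
    rw [Finset.sum_congr rfl (fun i _ => hz i)]
    simp [Finset.Icc_eq_empty (by omega : ¬ (1:ℕ) ≤ 1 - 1)]
  | succ t ht1 IH =>
    intro hle
    have htT : t ≤ T := by omega
    have IH' := IH (by omega)
    obtain ⟨s, rfl⟩ : ∃ s, t = s + 1 := ⟨t - 1, by omega⟩
    set t := s + 1
    set xb := (m:ℝ)⁻¹ • ∑ l, w t l with hxb
    set u : Fin m → H := fun i => w t i - xb with hu
    have hηt := hηnn t (by omega) htT
    have hsum0 : ∑ i, u i = 0 := by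
      simp only [hu, Finset.sum_sub_distrib, Finset.sum_const, Finset.card_univ,
        Fintype.card_fin, hxb]
      rw [← Nat.cast_smul_eq_nsmul ℝ, smul_smul, mul_inv_cancel₀ (ne_of_gt hm0), one_smul,
        sub_self]
    set Gb := (m:ℝ)⁻¹ • ∑ i, G t i with hGb
    have havg : (m:ℝ)⁻¹ • ∑ i, w (t+1) i = xb - η t • Gb := by
      have e1 : ∑ i, w (t+1) i = (∑ l, w t l) - η t • ∑ i, G t i := by
        simp only [hrec t (by omega) htT, Finset.sum_sub_distrib, ← Finset.smul_sum]
        congr 1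
        rw [Finset.sum_comm]
        apply Finset.sum_congr rfl
        intro l _
        rw [← Finset.sum_smul, hPcol l, one_smul]
      rw [e1, smul_sub, hxb, hGb, smul_comm]
    have hdecomp : ∀ i, w (t+1) i - (m:ℝ)⁻¹ • ∑ l, w (t+1) l
        = (∑ l, P i l • u l) + (-(η t)) • (G t i - Gb) := by
      intro i
      have e1 : ∑ l, P i l • u l = (∑ l, P i l • w t l) - xb := by
        simp only [hu, smul_sub, Finset.sum_sub_distrib]
        rw [← Finset.sum_smul, hProw i, one_smul]
      rw [havg, hrec t (by omega) htT i, e1]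
      module
    have step1 : Real.sqrt (∑ i, ‖w (t+1) i - (m:ℝ)⁻¹ • ∑ l, w (t+1) l‖ ^ 2)
        ≤ lam * Real.sqrt (∑ i, ‖u i‖ ^ 2) + Real.sqrt m * (η t * (2 * L)) := by
      calc Real.sqrt (∑ i, ‖w (t+1) i - (m:ℝ)⁻¹ • ∑ l, w (t+1) l‖ ^ 2)
          = Real.sqrt (∑ i, ‖(∑ l, P i l • u l) + (-(η t)) • (G t i - Gb)‖ ^ 2) := by
            congr 1
            exact Finset.sum_congr rfl fun i _ => by rw [hdecomp i]
        _ ≤ Real.sqrt (∑ i, ‖∑ l, P i l • u l‖ ^ 2)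
              + Real.sqrt (∑ i, ‖(-(η t)) • (G t i - Gb)‖ ^ 2) :=
            l2_triangle m _ _
        _ ≤ lam * Real.sqrt (∑ i, ‖u i‖ ^ 2) + Real.sqrt m * (η t * (2 * L)) := by
            gcongr ?_ + ?_
            · exact hspec u hsum0
            · apply l2_le_sup m _ _ (by positivity)
              intro i
              rw [norm_smul, norm_neg, Real.norm_of_nonneg hηt]
              have hGbd : ‖Gb‖ ≤ L := by
                rw [hGb, norm_smul, norm_inv, Real.norm_natCast]
                calc (m:ℝ)⁻¹ * ‖∑ i, G t i‖ ≤ (m:ℝ)⁻¹ * ((m:ℝ) * L) := by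
                      gcongr
                      calc ‖∑ i, G t i‖ ≤ ∑ i, ‖G t i‖ := norm_sum_le _ _
                        _ ≤ ∑ _i : Fin m, L := Finset.sum_le_sum fun i _ =>
                            hG t i (by omega) htT
                        _ = (m:ℝ) * L := by
                            simp [Finset.sum_const, Finset.card_univ, nsmul_eq_mul]
                  _ = L := by field_simp
              have := norm_sub_le (G t i) Gb
              have hGi := hG t i (by omega) htT
              have : ‖G t i - Gb‖ ≤ 2 * L := by linarith
              gcongr
      
    have hsqm : (0:ℝ) ≤ Real.sqrt m := Real.sqrt_nonneg _
    have main : Real.sqrt (∑ i, ‖w (t+1) i - (m:ℝ)⁻¹ • ∑ l, w (t+1) l‖ ^ 2)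
        ≤ lam * (2 * L * Real.sqrt m * ∑ q ∈ Finset.Icc 1 s, η q * lam ^ (s - q))
          + Real.sqrt m * (η t * (2 * L)) := by
      refine le_trans step1 ?_
      gcongr
      exact IH'
    refine le_trans main (le_of_eq ?_)
    have hsplit : ∑ q ∈ Finset.Icc 1 (t + 1 - 1), η q * lam ^ (t + 1 - 1 - q)
        = (∑ q ∈ Finset.Icc 1 s, η q * lam ^ (t - q)) + η t * lam ^ (t - t) := by
      have : t + 1 - 1 = t := rfl
      rw [this]
      exact Finset.sum_Icc_succ_top (by omega : 1 ≤ s + 1) _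
    rw [hsplit]
    have hpow : ∀ q ∈ Finset.Icc 1 s, η q * lam ^ (t - q) = lam * (η q * lam ^ (s - q)) := by
      intro q hq
      simp only [Finset.mem_Icc] at hq
      have : t - q = (s - q) + 1 := by omega
      rw [this, pow_succ]
      ring
    rw [Finset.sum_congr rfl hpow, ← Finset.mul_sum]
    have : t - t = 0 := by omega
    rw [this, pow_zero]
    ring
/-- Theorem: pointwise stability of D-SGD, convex case, general stepsizes. -/
theorem dsgd_stability_convex
    {H : Type*} [NormedAddCommGroup H] [InnerProductSpace ℝ H]
    {Z : Type*} (f : Z → H → ℝ) (f' : Z → H → H)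
    (L β : ℝ) (hL : 0 < L) (hβ : 0 < β)
    (hdiff : ∀ (z : Z) (x : H), HasFDerivAt (f z) ((innerSL ℝ) (f' z x)) x)
    (hlip : ∀ (z : Z) (x y : H), |f z x - f z y| ≤ L * ‖x - y‖)
    (hgradbd : ∀ (z : Z) (x : H), ‖f' z x‖ ≤ L)
    (hsmooth : ∀ (z : Z) (x y : H), ‖f' z x - f' z y‖ ≤ β * ‖x - y‖)
    (hconv : ∀ z : Z, ConvexOn ℝ Set.univ (f z))
    (m n T : ℕ) (hm : 1 ≤ m) (hn : 1 ≤ n) (hT : 1 ≤ T)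
    (P : Fin m → Fin m → ℝ)
    (hPsym : ∀ i l, P i l = P l i)
    (hPpos : ∀ i l, 0 ≤ P i l)
    (hProw : ∀ i, ∑ l, P i l = 1)
    (lam : ℝ) (hlam0 : 0 ≤ lam) (hlam1 : lam < 1)
    (hspec : ∀ vv : Fin m → H, ∑ i, vv i = 0 →
      Real.sqrt (∑ i, ‖∑ l, P i l • vv l‖ ^ 2) ≤ lam * Real.sqrt (∑ i, ‖vv i‖ ^ 2))
    (r : Fin m) (k : Fin n)
    (S S' : Fin m → Fin n → Z)
    (hSS' : ∀ (r' : Fin m) (k' : Fin n), (r', k') ≠ (r, k) → S' r' k' = S r' k')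
    (j : ℕ → Fin m → Fin n)
    (η : ℕ → ℝ) (hηpos : ∀ t, 1 ≤ t → t ≤ T → 0 < η t)
    (hηβ : ∀ t, 1 ≤ t → t ≤ T → η t ≤ 2 / β)
    (w₀ : H) (w v : ℕ → Fin m → H)
    (hw1 : ∀ i, w 1 i = w₀) (hv1 : ∀ i, v 1 i = w₀)
    (hwrec : ∀ t, 1 ≤ t → t ≤ T → ∀ i,
      w (t + 1) i = ∑ l, P i l • w t l - η t • f' (S i (j t i)) (w t i))
    (hvrec : ∀ t, 1 ≤ t → t ≤ T → ∀ i,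
      v (t + 1) i = ∑ l, P i l • v t l - η t • f' (S' i (j t i)) (v t i))
    :
    ∀ z : Z,
      |f z ((m : ℝ)⁻¹ • ∑ i, w (T + 1) i) - f z ((m : ℝ)⁻¹ • ∑ i, v (T + 1) i)| ≤
        4 * β * L ^ 2 * (∑ t ∈ Finset.Icc 1 T, η t * ∑ q ∈ Finset.Icc 1 (t - 1), η q * lam ^ (t - q - 1))
          + 2 * L ^ 2 / m * ∑ t ∈ Finset.Icc 1 T, η t * (if j t r = k then (1 : ℝ) else 0) := by
  intro z
  have hm0 : (0:ℝ) < m := by exact_mod_cast hm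
  have hmne : (m:ℝ) ≠ 0 := ne_of_gt hm0
  have hPcol : ∀ l, ∑ i, P i l = 1 := by
    intro l
    rw [Finset.sum_congr rfl (fun i _ => hPsym i l)]
    exact hProw l
  have hηnn : ∀ t, 1 ≤ t → t ≤ T → 0 ≤ η t := fun t h1 h2 => (hηpos t h1 h2).le
  have hconsw := consensus_bound m T hm P hProw hPcol lam hlam0 hspec L hL.le η hηnn
    (fun t i => f' (S i (j t i)) (w t i)) (fun t i _ _ => hgradbd _ _) w₀ w hw1 hwrec
  have hconsv := consensus_bound m T hm P hProw hPcol lam hlam0 hspec L hL.le η hηnn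
    (fun t i => f' (S' i (j t i)) (v t i)) (fun t i _ _ => hgradbd _ _) w₀ v hv1 hvrec
  have main : ∀ t, 1 ≤ t → t ≤ T + 1 →
      ‖(m:ℝ)⁻¹ • ∑ i, w t i - (m:ℝ)⁻¹ • ∑ i, v t i‖ ≤
        ∑ s ∈ Finset.Icc 1 (t-1),
          (4*β*L*(η s * ∑ q ∈ Finset.Icc 1 (s-1), η q * lam ^ (s-1-q))
            + 2*L/(m:ℝ)*(η s * (if j s r = k then (1:ℝ) else 0))) := by
    intro t ht1
    induction t, ht1 using Nat.le_induction with
    | base =>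
      intro _
      rw [Finset.Icc_eq_empty (by omega : ¬ (1:ℕ) ≤ 1 - 1), Finset.sum_empty]
      have he : ∀ i : Fin m, w 1 i = v 1 i := fun i => by rw [hw1, hv1]
      rw [Finset.sum_congr rfl (fun i _ => he i), sub_self, norm_zero]
    | succ t ht1 IH =>
      intro hle
      have htT : t ≤ T := by omega
      have IH' := IH (by omega)
      have hηt0 : 0 ≤ η t := hηnn t ht1 htT
      have hCw := hconsw t (by omega) (by omega)
      have hCv := hconsv t (by omega) (by omega)
      set Sig := ∑ q ∈ Finset.Icc 1 (t-1), η q * lam ^ (t-1-q) with hSigd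
      have hSig0 : 0 ≤ Sig := by
        apply Finset.sum_nonneg
        intro q hq
        rw [Finset.mem_Icc] at hq
        have := hηnn q hq.1 (by omega)
        positivity
      set wb := (m:ℝ)⁻¹ • ∑ i, w t i with hwbd
      set vb := (m:ℝ)⁻¹ • ∑ i, v t i with hvbd
      set g' : H → H := fun x => (m:ℝ)⁻¹ • ∑ i, f' (S i (j t i)) x with hg'
      set gf : H → ℝ := fun x => (m:ℝ)⁻¹ * ∑ i, f (S i (j t i)) x with hgf
      -- differentiability of the averaged function
      have hdiffg : ∀ x, HasFDerivAt gf ((innerSL ℝ) (g' x)) x := by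
        intro x
        have h1 : HasFDerivAt (fun y => ∑ i, f (S i (j t i)) y)
            (∑ i, (innerSL ℝ) (f' (S i (j t i)) x)) x :=
          HasFDerivAt.fun_sum (fun i _ => hdiff _ x)
        have h2 := h1.const_mul ((m:ℝ)⁻¹)
        have h3 : (innerSL ℝ) (g' x) = (m:ℝ)⁻¹ • ∑ i, (innerSL ℝ) (f' (S i (j t i)) x) := by
          simp only [hg', map_smul, map_sum]
        rw [h3]
        exact h2
      -- smoothness of averaged gradient
      have hsmoothg : ∀ x y, ‖g' x - g' y‖ ≤ β * ‖x - y‖ := by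
        intro x y
        have h1 : g' x - g' y = (m:ℝ)⁻¹ • ∑ i, (f' (S i (j t i)) x - f' (S i (j t i)) y) := by
          simp only [hg']
          rw [Finset.sum_sub_distrib, smul_sub]
        rw [h1, norm_smul, norm_inv, Real.norm_natCast]
        calc (m:ℝ)⁻¹ * ‖∑ i, (f' (S i (j t i)) x - f' (S i (j t i)) y)‖
            ≤ (m:ℝ)⁻¹ * ∑ i, ‖f' (S i (j t i)) x - f' (S i (j t i)) y‖ := by
              gcongr
              exact norm_sum_le _ _
          _ ≤ (m:ℝ)⁻¹ * ∑ _i : Fin m, β * ‖x - y‖ := by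
              gcongr with i hi
              exact hsmooth _ x y
          _ = β * ‖x - y‖ := by
              rw [Finset.sum_const, Finset.card_univ, Fintype.card_fin, nsmul_eq_mul]
              field_simp
      -- first-order lower bound for averaged function
      have hinner_avg : ∀ x u : H, ⟪g' x, u⟫ = (m:ℝ)⁻¹ * ∑ i, ⟪f' (S i (j t i)) x, u⟫ := by
        intro x u
        simp only [hg']
        rw [real_inner_smul_left, sum_inner]
      have hlowg : ∀ x y, gf x + ⟪g' x, y - x⟫ ≤ gf y := by
        intro x y
        have h2 : ∑ i, (f (S i (j t i)) x + ⟪f' (S i (j t i)) x, y - x⟫)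
            ≤ ∑ i, f (S i (j t i)) y :=
          Finset.sum_le_sum (fun i _ =>
            grad_lower (f (S i (j t i))) (f' (S i (j t i))) (fun u => hdiff _ u) (hconv _) x y)
        simp only [hgf]
        rw [hinner_avg, ← mul_add, ← Finset.sum_add_distrib]
        exact mul_le_mul_of_nonneg_left h2 (by positivity)
      -- descent bound for averaged function
      have hdescg : ∀ x y, gf y ≤ gf x + ⟪g' x, y - x⟫ + β/2 * ‖y - x‖^2 := by
        intro x y
        have h2 : ∑ i, f (S i (j t i)) y
            ≤ ∑ i, (f (S i (j t i)) x + ⟪f' (S i (j t i)) x, y - x⟫ + β/2 * ‖y - x‖^2) :=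
          Finset.sum_le_sum (fun i _ =>
            descent_lemma (f (S i (j t i))) (f' (S i (j t i))) β hβ (fun u => hdiff _ u)
              (fun a b => hsmooth _ a b) x y)
        simp only [hgf]
        rw [hinner_avg]
        have h4 := mul_le_mul_of_nonneg_left h2 (by positivity : (0:ℝ) ≤ (m:ℝ)⁻¹)
        calc (m:ℝ)⁻¹ * ∑ i, f (S i (j t i)) y
            ≤ (m:ℝ)⁻¹ * ∑ i, (f (S i (j t i)) x + ⟪f' (S i (j t i)) x, y - x⟫
                + β/2 * ‖y - x‖^2) := h4
          _ = (m:ℝ)⁻¹ * ∑ i, f (S i (j t i)) x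
                + (m:ℝ)⁻¹ * ∑ i, ⟪f' (S i (j t i)) x, y - x⟫ + β/2 * ‖y - x‖^2 := by
              rw [Finset.sum_add_distrib, Finset.sum_add_distrib, Finset.sum_const,
                Finset.card_univ, Fintype.card_fin, nsmul_eq_mul, mul_add, mul_add,
                ← mul_assoc, inv_mul_cancel₀ hmne, one_mul]
      have hcoco := coco_lemma gf g' β hβ hlowg hdescg
      have hne := nonexp_lemma g' β (η t) hβ hηt0 (hηβ t ht1 htT) hcoco wb vb
      -- average recursions
      set Gw := (m:ℝ)⁻¹ • ∑ i, f' (S i (j t i)) (w t i) with hGwd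
      set Gv := (m:ℝ)⁻¹ • ∑ i, f' (S' i (j t i)) (v t i) with hGvd
      have havgw : (m:ℝ)⁻¹ • ∑ i, w (t+1) i = wb - η t • Gw := by
        have e1 : ∑ i, w (t+1) i = (∑ l, w t l) - η t • ∑ i, f' (S i (j t i)) (w t i) := by
          rw [Finset.sum_congr rfl (fun i (_ : i ∈ Finset.univ) => hwrec t ht1 htT i),
            Finset.sum_sub_distrib, ← Finset.smul_sum]
          congr 1
          rw [Finset.sum_comm]
          exact Finset.sum_congr rfl fun l _ => by rw [← Finset.sum_smul, hPcol l, one_smul]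
        rw [e1, smul_sub, smul_comm]
      have havgv : (m:ℝ)⁻¹ • ∑ i, v (t+1) i = vb - η t • Gv := by
        have e1 : ∑ i, v (t+1) i = (∑ l, v t l) - η t • ∑ i, f' (S' i (j t i)) (v t i) := by
          rw [Finset.sum_congr rfl (fun i (_ : i ∈ Finset.univ) => hvrec t ht1 htT i),
            Finset.sum_sub_distrib, ← Finset.smul_sum]
          congr 1
          rw [Finset.sum_comm]
          exact Finset.sum_congr rfl fun l _ => by rw [← Finset.sum_smul, hPcol l, one_smul]
        rw [e1, smul_sub, smul_comm]
      -- the error decomposition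
      set Ei : Fin m → H := fun i =>
        (f' (S i (j t i)) (w t i) - f' (S i (j t i)) wb)
        - (f' (S' i (j t i)) (v t i) - f' (S' i (j t i)) vb)
        - (f' (S' i (j t i)) vb - f' (S i (j t i)) vb) with hEid
      have hE : (m:ℝ)⁻¹ • ∑ i, Ei i = Gw - g' wb - (Gv - g' vb) := by
        have h1 : ∑ i, Ei i = (∑ i, f' (S i (j t i)) (w t i)) - (∑ i, f' (S i (j t i)) wb)
            - ((∑ i, f' (S' i (j t i)) (v t i)) - (∑ i, f' (S i (j t i)) vb)) := by
          simp only [hEid]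
          rw [Finset.sum_sub_distrib, Finset.sum_sub_distrib, Finset.sum_sub_distrib,
            Finset.sum_sub_distrib, Finset.sum_sub_distrib]
          abel
        rw [h1]
        simp only [hGwd, hGvd, hg']
        module
      have hid : (m:ℝ)⁻¹ • ∑ i, w (t+1) i - (m:ℝ)⁻¹ • ∑ i, v (t+1) i
          = ((wb - η t • g' wb) - (vb - η t • g' vb)) - η t • ((m:ℝ)⁻¹ • ∑ i, Ei i) := by
        rw [havgw, havgv, hE]
        module
      -- per-node bound on the error
      have hEibd : ∀ i : Fin m, ‖Ei i‖ ≤ β * ‖w t i - wb‖ + β * ‖v t i - vb‖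
          + (if i = r ∧ j t i = k then 2*L else 0) := by
        intro i
        have t1 : ‖f' (S i (j t i)) (w t i) - f' (S i (j t i)) wb‖ ≤ β * ‖w t i - wb‖ :=
          hsmooth _ _ _
        have t2 : ‖f' (S' i (j t i)) (v t i) - f' (S' i (j t i)) vb‖ ≤ β * ‖v t i - vb‖ :=
          hsmooth _ _ _
        have t3 : ‖f' (S' i (j t i)) vb - f' (S i (j t i)) vb‖
            ≤ (if i = r ∧ j t i = k then 2*L else 0) := by
          by_cases hik : i = r ∧ j t i = k
          · rw [if_pos hik]
            calc ‖f' (S' i (j t i)) vb - f' (S i (j t i)) vb‖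
                ≤ ‖f' (S' i (j t i)) vb‖ + ‖f' (S i (j t i)) vb‖ := norm_sub_le _ _
              _ ≤ 2*L := by
                  have h5 := hgradbd (S' i (j t i)) vb
                  have h6 := hgradbd (S i (j t i)) vb
                  linarith
          · rw [if_neg hik, hSS' i (j t i) (by simpa [Prod.ext_iff] using hik), sub_self,
              norm_zero]
        calc ‖Ei i‖
            ≤ ‖(f' (S i (j t i)) (w t i) - f' (S i (j t i)) wb)
                - (f' (S' i (j t i)) (v t i) - f' (S' i (j t i)) vb)‖
              + ‖f' (S' i (j t i)) vb - f' (S i (j t i)) vb‖ := by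
              simp only [hEid]
              exact norm_sub_le _ _
          _ ≤ ‖f' (S i (j t i)) (w t i) - f' (S i (j t i)) wb‖
              + ‖f' (S' i (j t i)) (v t i) - f' (S' i (j t i)) vb‖
              + ‖f' (S' i (j t i)) vb - f' (S i (j t i)) vb‖ := by
              have := norm_sub_le (f' (S i (j t i)) (w t i) - f' (S i (j t i)) wb)
                (f' (S' i (j t i)) (v t i) - f' (S' i (j t i)) vb)
              linarith
          _ ≤ β * ‖w t i - wb‖ + β * ‖v t i - vb‖
              + (if i = r ∧ j t i = k then 2*L else 0) := by linarith
      -- χ sum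
      have hchi : ∑ i, (if i = r ∧ j t i = k then 2*L else 0 : ℝ)
          = (if j t r = k then 2*L else 0) := by
        rw [Finset.sum_eq_single r]
        · simp
        · intro b _ hb
          simp [hb]
        · intro h
          exact absurd (Finset.mem_univ r) h
      -- ℓ1 consensus bounds
      have hss : Real.sqrt (m:ℝ) * Real.sqrt (m:ℝ) = (m:ℝ) := Real.mul_self_sqrt hm0.le
      have hl1w : ∑ i, ‖w t i - wb‖ ≤ 2*L*(m:ℝ)*Sig := by
        calc ∑ i, ‖w t i - wb‖
            ≤ Real.sqrt m * Real.sqrt (∑ i, ‖w t i - wb‖^2) := l1_le_sqrt_l2 m _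
          _ ≤ Real.sqrt m * (2*L*Real.sqrt m * Sig) := by
              gcongr
          _ = 2*L*(m:ℝ)*Sig := by linear_combination (2*L*Sig) * hss
      have hl1v : ∑ i, ‖v t i - vb‖ ≤ 2*L*(m:ℝ)*Sig := by
        calc ∑ i, ‖v t i - vb‖
            ≤ Real.sqrt m * Real.sqrt (∑ i, ‖v t i - vb‖^2) := l1_le_sqrt_l2 m _
          _ ≤ Real.sqrt m * (2*L*Real.sqrt m * Sig) := by
              gcongr
          _ = 2*L*(m:ℝ)*Sig := by linear_combination (2*L*Sig) * hss
      -- bound on the error norm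
      have hEnorm : ‖(m:ℝ)⁻¹ • ∑ i, Ei i‖
          ≤ (m:ℝ)⁻¹ * (β*(2*L*(m:ℝ)*Sig) + β*(2*L*(m:ℝ)*Sig)
              + (if j t r = k then 2*L else 0)) := by
        rw [norm_smul, norm_inv, Real.norm_natCast]
        apply mul_le_mul_of_nonneg_left _ (by positivity : (0:ℝ) ≤ (m:ℝ)⁻¹)
        calc ‖∑ i, Ei i‖ ≤ ∑ i, ‖Ei i‖ := norm_sum_le _ _
          _ ≤ ∑ i, (β * ‖w t i - wb‖ + β * ‖v t i - vb‖
              + (if i = r ∧ j t i = k then 2*L else 0)) :=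
            Finset.sum_le_sum (fun i _ => hEibd i)
          _ = β * (∑ i, ‖w t i - wb‖) + β * (∑ i, ‖v t i - vb‖)
              + ∑ i, (if i = r ∧ j t i = k then 2*L else 0 : ℝ) := by
              rw [Finset.sum_add_distrib, Finset.sum_add_distrib, Finset.mul_sum,
                Finset.mul_sum]
          _ ≤ β*(2*L*(m:ℝ)*Sig) + β*(2*L*(m:ℝ)*Sig) + (if j t r = k then 2*L else 0) := by
              rw [hchi]
              gcongr
      -- one step bound
      have hstep : ‖(m:ℝ)⁻¹ • ∑ i, w (t+1) i - (m:ℝ)⁻¹ • ∑ i, v (t+1) i‖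
          ≤ ‖wb - vb‖ + (4*β*L*(η t * Sig)
              + 2*L/(m:ℝ)*(η t * (if j t r = k then (1:ℝ) else 0))) := by
        rw [hid]
        calc ‖((wb - η t • g' wb) - (vb - η t • g' vb)) - η t • ((m:ℝ)⁻¹ • ∑ i, Ei i)‖
            ≤ ‖(wb - η t • g' wb) - (vb - η t • g' vb)‖
              + ‖η t • ((m:ℝ)⁻¹ • ∑ i, Ei i)‖ := norm_sub_le _ _
          _ ≤ ‖wb - vb‖ + η t * ‖(m:ℝ)⁻¹ • ∑ i, Ei i‖ := by
              rw [norm_smul, Real.norm_of_nonneg hηt0]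
              gcongr
          _ ≤ ‖wb - vb‖ + η t * ((m:ℝ)⁻¹ * (β*(2*L*(m:ℝ)*Sig) + β*(2*L*(m:ℝ)*Sig)
              + (if j t r = k then 2*L else 0))) := by
              gcongr
          _ = ‖wb - vb‖ + (4*β*L*(η t * Sig)
              + 2*L/(m:ℝ)*(η t * (if j t r = k then (1:ℝ) else 0))) := by
              have hind : (if j t r = k then (2*L:ℝ) else 0)
                  = 2*L*(if j t r = k then (1:ℝ) else 0) := by
                split <;> ring
              rw [hind]
              generalize (if j t r = k then (1:ℝ) else 0) = c
              field_simp
              ring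
      -- assemble
      obtain ⟨s, rfl⟩ : ∃ s, t = s + 1 := ⟨t - 1, by omega⟩
      have hsplit : ∑ p ∈ Finset.Icc 1 (s + 1 + 1 - 1),
            (4*β*L*(η p * ∑ q ∈ Finset.Icc 1 (p-1), η q * lam ^ (p-1-q))
              + 2*L/(m:ℝ)*(η p * (if j p r = k then (1:ℝ) else 0)))
          = (∑ p ∈ Finset.Icc 1 (s + 1 - 1),
            (4*β*L*(η p * ∑ q ∈ Finset.Icc 1 (p-1), η q * lam ^ (p-1-q))
              + 2*L/(m:ℝ)*(η p * (if j p r = k then (1:ℝ) else 0))))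
            + (4*β*L*(η (s+1) * Sig)
              + 2*L/(m:ℝ)*(η (s+1) * (if j (s+1) r = k then (1:ℝ) else 0))) := by
        rw [show s + 1 + 1 - 1 = (s + 1 - 1) + 1 from rfl]
        rw [Finset.sum_Icc_succ_top (by omega : 1 ≤ s + 1 - 1 + 1)]
        rw [show s + 1 - 1 + 1 = s + 1 from rfl]
      rw [hsplit]
      calc ‖(m:ℝ)⁻¹ • ∑ i, w (s+1+1) i - (m:ℝ)⁻¹ • ∑ i, v (s+1+1) i‖
          ≤ ‖wb - vb‖ + (4*β*L*(η (s+1) * Sig)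
              + 2*L/(m:ℝ)*(η (s+1) * (if j (s+1) r = k then (1:ℝ) else 0))) := hstep
        _ ≤ (∑ p ∈ Finset.Icc 1 (s + 1 - 1),
            (4*β*L*(η p * ∑ q ∈ Finset.Icc 1 (p-1), η q * lam ^ (p-1-q))
              + 2*L/(m:ℝ)*(η p * (if j p r = k then (1:ℝ) else 0))))
            + (4*β*L*(η (s+1) * Sig)
              + 2*L/(m:ℝ)*(η (s+1) * (if j (s+1) r = k then (1:ℝ) else 0))) := by
            gcongr
  -- finish
  have hmain := main (T+1) (by omega) (le_refl _)
  rw [show T + 1 - 1 = T from rfl] at hmain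
  have hfin := hlip z ((m:ℝ)⁻¹ • ∑ i, w (T+1) i) ((m:ℝ)⁻¹ • ∑ i, v (T+1) i)
  have h2 := mul_le_mul_of_nonneg_left hmain hL.le
  refine le_trans hfin (le_trans h2 (le_of_eq ?_))
  rw [Finset.mul_sum, Finset.sum_congr rfl
    (fun i (_ : i ∈ Finset.Icc 1 T) => mul_add L _ _), Finset.sum_add_distrib]
  congr 1
  · rw [Finset.mul_sum]
    apply Finset.sum_congr rfl
    intro p hp
    have hexp : (∑ q ∈ Finset.Icc 1 (p-1), η q * lam ^ (p-q-1))
        = ∑ q ∈ Finset.Icc 1 (p-1), η q * lam ^ (p-1-q) := by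
      apply Finset.sum_congr rfl
      intro q hq
      rw [show p - q - 1 = p - 1 - q from by omega]
    rw [hexp]
    ring
  · rw [Finset.mul_sum]
    apply Finset.sum_congr rfl
    intro p hp
    ring
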